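/- arXiv:2102.04386 — 2 statements merged into one kernel-verified Lean document; each statement's English description precedes it below -/
import Mathlib

section
/- Composition of spans of finite sets corresponds to matrix multiplication: if a span X ← A → Y is encoded by the matrix M with M(y,x) = |{a ∈ A : a maps to x and y}|, then the pullback composition of two spans is encoded by the product of their matrices. -/
/-- Composition of spans of finite sets corresponds to matrix multiplication:
the fiber-cardinality matrix of the pullback composite of two spans
`X ← A → Y` and `Y ← B → Z` is the product of their fiber-cardinality
matrices. -/
theorem span_comp_eq_matrix_mul
    {X Y Z A B : Type} [Fintype X] [Fintype Y] [Fintype Z] [Fintype A] [Fintype B]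
    [DecidableEq X] [DecidableEq Y] [DecidableEq Z]
    (f : A → X) (g : A → Y) (h : B → Y) (k : B → Z) (x : X) (z : Z) :
    Fintype.card {p : {p : A × B // g p.1 = h p.2} // f p.1.1 = x ∧ k p.1.2 = z} =
      ∑ y : Y,
        Fintype.card {b : B // h b = y ∧ k b = z} *
          Fintype.card {a : A // f a = x ∧ g a = y} := by
  classical
  have e : {p : {p : A × B // g p.1 = h p.2} // f p.1.1 = x ∧ k p.1.2 = z} ≃
      Σ y : Y, {b : B // h b = y ∧ k b = z} × {a : A // f a = x ∧ g a = y} :=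
    { toFun := fun p => ⟨g p.1.1.1, ⟨p.1.1.2, p.1.2.symm, p.2.2⟩, ⟨p.1.1.1, p.2.1, rfl⟩⟩
      invFun := fun s => ⟨⟨(s.2.2.1, s.2.1.1), by
        rcases s with ⟨y, b, a⟩
        simp [a.2.2, b.2.1]⟩, by
        rcases s with ⟨y, b, a⟩
        exact ⟨a.2.1, b.2.2⟩⟩
      left_inv := fun p => rfl
      right_inv := fun s => by
        rcases s with ⟨y, ⟨b, hb1, hb2⟩, ⟨a, ha1, ha2⟩⟩
        subst ha2
        rfl }
  rw [Fintype.card_congr e, Fintype.card_sigma]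
  exact Finset.sum_congr rfl fun y _ => Fintype.card_prod _ _
end

section
/- Cascade identity for generalized controlled-nots: let X, Y be finite index sets and x ∉ Y, x ∉ X, y ∉ X ∪ Y ∪ {x}. Then G(X,x) ∘ G({x} ∪ Y, y) = G(X ∪ Y, y) ∘ G({x} ∪ Y, y) ∘ G(X,x) as maps 𝔽₂ⁿ → 𝔽₂ⁿ. -/
/-- The generalized controlled-not gate `G(X,x)` on `𝔽₂ⁿ`: it adds the product
of the coordinates indexed by `X` to coordinate `x`. -/
def gcnotGate {n : ℕ} (X : Finset (Fin n)) (x : Fin n) (v : Fin n → ZMod 2) :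
    Fin n → ZMod 2 :=
  Function.update v x (v x + ∏ i ∈ X, v i)

lemma prod_union_zmod2 {n} (X Y : Finset (Fin n)) (f : Fin n → ZMod 2) :
    ∏ i ∈ X ∪ Y, f i = (∏ i ∈ X, f i) * ∏ i ∈ Y, f i := by
  have h := Finset.prod_union_inter (s₁ := X) (s₂ := Y) (f := f)
  have hsub : X ∩ Y ⊆ X ∪ Y := Finset.inter_subset_left.trans Finset.subset_union_left
  have idem : ∀ a : ZMod 2, a * a = a := by decide
  rw [← h, ← Finset.prod_sdiff hsub, mul_assoc, idem]

/-- Cascade identity for generalized controlled-nots: if `x ∉ X`, `x ∉ Y` and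
`y ∉ X ∪ Y ∪ {x}`, then
`G(X,x) ∘ G({x} ∪ Y, y) = G(X ∪ Y, y) ∘ G({x} ∪ Y, y) ∘ G(X,x)`. -/
theorem gcnot_cascade (n : ℕ) (X Y : Finset (Fin n)) (x y : Fin n)
    (hxX : x ∉ X) (hxY : x ∉ Y) (hy : y ∉ X ∪ Y ∪ {x}) :
    gcnotGate X x ∘ gcnotGate (insert x Y) y =
      gcnotGate (X ∪ Y) y ∘ gcnotGate (insert x Y) y ∘ gcnotGate X x := by
  have hyX : y ∉ X := fun h => hy (by simp [h])
  have hyY : y ∉ Y := fun h => hy (by simp [h])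
  have hyx : y ≠ x := by rintro rfl; exact hy (by simp)
  have hxyU : x ∉ X ∪ Y := by simp [hxX, hxY]
  have hyU : y ∉ X ∪ Y := by simp [hyX, hyY]
  funext v
  set P := ∏ i ∈ X, v i with hP
  set Q := ∏ i ∈ Y, v i with hQ
  have h1 : gcnotGate (insert x Y) y v = Function.update v y (v y + v x * Q) := by
    simp [gcnotGate, Finset.prod_insert hxY, hQ]
  have h2 : gcnotGate X x (Function.update v y (v y + v x * Q)) =
      Function.update (Function.update v y (v y + v x * Q)) x (v x + P) := by
    simp only [gcnotGate, Finset.prod_update_of_notMem hyX,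
      Function.update_of_ne hyx.symm, hP]
  have h3 : gcnotGate X x v = Function.update v x (v x + P) := rfl
  have h4 : gcnotGate (insert x Y) y (Function.update v x (v x + P)) =
      Function.update (Function.update v x (v x + P)) y (v y + (v x + P) * Q) := by
    simp only [gcnotGate, Finset.prod_insert hxY, Finset.prod_update_of_notMem hxY,
      Function.update_self, Function.update_of_ne hyx, hQ]
  have h5 : gcnotGate (X ∪ Y)
      y (Function.update (Function.update v x (v x + P)) y (v y + (v x + P) * Q)) =
      Function.update (Function.update v x (v x + P)) y (v y + v x * Q) := by
    have key : ∀ a b c d : ZMod 2, d + (a + b) * c + b * c = d + a * c := by decide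
    rw [gcnotGate, Function.update_idem, Function.update_self,
      Finset.prod_update_of_notMem hyU, Finset.prod_update_of_notMem hxyU,
      prod_union_zmod2, ← hP, ← hQ, key (v x) P Q (v y)]
  simp only [Function.comp_apply, h1, h2, h3, h4, h5]
  rw [Function.update_comm hyx]
end
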